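/- For every real a ≥ 0, Φ(a√2) − Φ(a) ≤ (1/√(2π)) ∫ from √(ln 2) to √(2·ln 2) of e^{−t²/2} dt, and this integral value is strictly less than 1/6 (it is approximately 0.08302). -/

import Mathlib

open MeasureTheory ProbabilityTheory Real

/-- The standard normal cumulative distribution function
`Φ(x) = (1/√(2π)) ∫_{-∞}^{x} e^{-t²/2} dt`. -/
noncomputable def stdGaussianCDF (x : ℝ) : ℝ :=
  (Real.sqrt (2 * Real.pi))⁻¹ * ∫ t in Set.Iic x, Real.exp (-t ^ 2 / 2)

lemma phiCont : Continuous fun t : ℝ => Real.exp (-t ^ 2 / 2) := by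
  continuity

lemma phiIntegrable : MeasureTheory.Integrable fun t : ℝ => Real.exp (-t ^ 2 / 2) := by
  have h := integrable_exp_neg_mul_sq (b := (1/2 : ℝ)) (by norm_num)
  convert h using 2 with t
  ring_nf

noncomputable def Gfun (x : ℝ) : ℝ := ∫ t in (0:ℝ)..x, Real.exp (-t ^ 2 / 2)

lemma hGderiv (x : ℝ) : HasDerivAt Gfun (Real.exp (-x ^ 2 / 2)) x :=
  intervalIntegral.integral_hasDerivAt_right (phiCont.intervalIntegrable _ _)
    phiCont.aestronglyMeasurable.stronglyMeasurableAtFilter phiCont.continuousAt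

noncomputable def Ffun (a : ℝ) : ℝ := Gfun (a * Real.sqrt 2) - Gfun a

lemma hFderiv (a : ℝ) :
    HasDerivAt Ffun (Real.exp (-a ^ 2) * Real.sqrt 2 - Real.exp (-a ^ 2 / 2)) a := by
  have h1 : HasDerivAt (fun a : ℝ => Gfun (a * Real.sqrt 2))
      (Real.exp (-(a * Real.sqrt 2) ^ 2 / 2) * Real.sqrt 2) a := by
    exact (hGderiv (a * Real.sqrt 2)).comp a (hasDerivAt_mul_const _)
  have h2 : (-(a * Real.sqrt 2) ^ 2 / 2) = -a ^ 2 := by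
    have : Real.sqrt 2 ^ 2 = 2 := Real.sq_sqrt (by norm_num)
    field_simp [mul_pow, this]
    rw [this]
  rw [h2] at h1
  exact h1.sub (hGderiv a)

lemma Fderiv_eq (a : ℝ) :
    deriv Ffun a = Real.exp (-a ^ 2) * Real.sqrt 2 - Real.exp (-a ^ 2 / 2) :=
  (hFderiv a).deriv

lemma exp_log2half : Real.exp (Real.log 2 / 2) = Real.sqrt 2 := by
  rw [← Real.log_sqrt (by norm_num : (0:ℝ) ≤ 2), Real.exp_log (Real.sqrt_pos.2 (by norm_num))]

lemma F_le_FL (a : ℝ) (ha : 0 ≤ a) : Ffun a ≤ Ffun (Real.sqrt (Real.log 2)) := by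
  set L := Real.sqrt (Real.log 2) with hL
  have hlog2 : (0:ℝ) < Real.log 2 := Real.log_pos (by norm_num)
  have hLsq : L ^ 2 = Real.log 2 := Real.sq_sqrt hlog2.le
  have hL0 : 0 ≤ L := Real.sqrt_nonneg _
  rcases le_total a L with h | h
  · have hmono : MonotoneOn Ffun (Set.Icc 0 L) := by
      apply monotoneOn_of_deriv_nonneg (convex_Icc _ _)
        (fun x _ => ((hFderiv x).differentiableAt).continuousAt.continuousWithinAt)
        (fun x _ => ((hFderiv x).differentiableAt).differentiableWithinAt)
      intro x hx
      rw [interior_Icc] at hx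
      rw [Fderiv_eq]
      have hx2 : x ^ 2 ≤ Real.log 2 := by
        rw [← hLsq]; exact pow_le_pow_left₀ hx.1.le hx.2.le 2
      have : Real.exp (-x ^ 2 / 2) ≤ Real.exp (-x ^ 2) * Real.sqrt 2 := by
        rw [← exp_log2half, ← Real.exp_add]
        apply Real.exp_le_exp.2; linarith
      linarith
    exact hmono ⟨ha, h⟩ ⟨hL0, le_refl L⟩ h
  · have hanti : AntitoneOn Ffun (Set.Ici L) := by
      apply antitoneOn_of_deriv_nonpos (convex_Ici _)
        (fun x _ => ((hFderiv x).differentiableAt).continuousAt.continuousWithinAt)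
        (fun x _ => ((hFderiv x).differentiableAt).differentiableWithinAt)
      intro x hx
      rw [interior_Ici] at hx
      rw [Fderiv_eq]
      have hx2 : Real.log 2 ≤ x ^ 2 := by
        rw [← hLsq]; exact pow_le_pow_left₀ hL0 hx.le 2
      have : Real.exp (-x ^ 2) * Real.sqrt 2 ≤ Real.exp (-x ^ 2 / 2) := by
        rw [← exp_log2half, ← Real.exp_add]
        apply Real.exp_le_exp.2; linarith
      linarith
    exact hanti (Set.self_mem_Ici) h h

theorem stmt9 (a : ℝ) (ha : 0 ≤ a) :
    stdGaussianCDF (a * Real.sqrt 2) - stdGaussianCDF a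
        ≤ (Real.sqrt (2 * Real.pi))⁻¹
          * ∫ t in Real.sqrt (Real.log 2)..Real.sqrt (2 * Real.log 2), Real.exp (-t ^ 2 / 2)
      ∧ (Real.sqrt (2 * Real.pi))⁻¹
          * (∫ t in Real.sqrt (Real.log 2)..Real.sqrt (2 * Real.log 2), Real.exp (-t ^ 2 / 2))
        < 1 / 6 := by
  have hlog2 : (0:ℝ) < Real.log 2 := Real.log_pos (by norm_num)
  set L := Real.sqrt (Real.log 2) with hLdef
  have hL2 : L * Real.sqrt 2 = Real.sqrt (2 * Real.log 2) := by
    rw [← Real.sqrt_mul hlog2.le, mul_comm]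
  have hc0 : (0:ℝ) < (Real.sqrt (2 * Real.pi))⁻¹ :=
    inv_pos.2 (Real.sqrt_pos.2 (by positivity))
  have hIratio : ∀ x y : ℝ,
      (∫ t in x..y, Real.exp (-t ^ 2 / 2)) = Gfun y - Gfun x := by
    intro x y
    rw [Gfun, Gfun, ← intervalIntegral.integral_interval_sub_left
      (phiCont.intervalIntegrable _ _) (phiCont.intervalIntegrable _ _)]
  constructor
  · -- first inequality
    have hdiff : stdGaussianCDF (a * Real.sqrt 2) - stdGaussianCDF a
        = (Real.sqrt (2 * Real.pi))⁻¹ * ∫ t in a..(a * Real.sqrt 2), Real.exp (-t ^ 2 / 2) := by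
      unfold stdGaussianCDF
      rw [← mul_sub, intervalIntegral.integral_Iic_sub_Iic phiIntegrable.integrableOn phiIntegrable.integrableOn]
    rw [hdiff, ← hL2, hIratio, hIratio]
    apply mul_le_mul_of_nonneg_left _ hc0.le
    exact F_le_FL a ha
  · -- numeric bound
    have hbound : (∫ t in L..(Real.sqrt (2 * Real.log 2)), Real.exp (-t ^ 2 / 2))
        ≤ (Real.sqrt (2 * Real.log 2) - L) * (Real.sqrt 2)⁻¹ := by
      have hle : L ≤ Real.sqrt (2 * Real.log 2) :=
        Real.sqrt_le_sqrt (by linarith)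
      have : (∫ t in L..(Real.sqrt (2 * Real.log 2)), Real.exp (-t ^ 2 / 2))
          ≤ ∫ _t in L..(Real.sqrt (2 * Real.log 2)), ((Real.sqrt 2)⁻¹ : ℝ) := by
        apply intervalIntegral.integral_mono_on hle (phiCont.intervalIntegrable _ _)
          (intervalIntegrable_const)
        intro x hx
        have hx0 : 0 ≤ x := le_trans (Real.sqrt_nonneg _) hx.1
        have hx2 : Real.log 2 ≤ x ^ 2 := by
          have := Real.sq_sqrt hlog2.le
          calc Real.log 2 = L ^ 2 := this.symm
            _ ≤ x ^ 2 := pow_le_pow_left₀ (Real.sqrt_nonneg _) hx.1 2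
        calc Real.exp (-x ^ 2 / 2) ≤ Real.exp (-Real.log 2 / 2) :=
              Real.exp_le_exp.2 (by linarith)
          _ = (Real.sqrt 2)⁻¹ := by
              rw [← exp_log2half, ← Real.exp_neg]; ring_nf
      simpa using this
    have key : (Real.sqrt (2 * Real.pi))⁻¹ * ((Real.sqrt (2 * Real.log 2) - L) * (Real.sqrt 2)⁻¹)
        < 1 / 6 := by
      have hsqrt2 : Real.sqrt 2 ^ 2 = 2 := Real.sq_sqrt (by norm_num)
      have h2L : Real.sqrt (2 * Real.log 2) = Real.sqrt 2 * L := by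
        rw [hLdef, ← Real.sqrt_mul (by norm_num : (0:ℝ) ≤ 2)]
      rw [h2L]
      have hLub : L < 0.84 := by
        rw [hLdef]
        have : Real.log 2 < 0.7 := by
          have := Real.log_two_lt_d9; linarith
        calc Real.sqrt (Real.log 2) < Real.sqrt 0.7 := by
              apply Real.sqrt_lt_sqrt hlog2.le this
          _ < 0.84 := by
              rw [show (0.84 : ℝ) = Real.sqrt (0.84 ^ 2) by rw [Real.sqrt_sq]; norm_num]
              apply Real.sqrt_lt_sqrt (by norm_num); norm_num
      have hs2ub : Real.sqrt 2 < 1.42 := by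
        rw [show (1.42 : ℝ) = Real.sqrt (1.42 ^ 2) by rw [Real.sqrt_sq]; norm_num]
        apply Real.sqrt_lt_sqrt (by norm_num); norm_num
      have hs2lb : 1.41 < Real.sqrt 2 := by
        rw [show (1.41 : ℝ) = Real.sqrt (1.41 ^ 2) by rw [Real.sqrt_sq]; norm_num]
        apply Real.sqrt_lt_sqrt (by norm_num); norm_num
      have hpi : (3.14 : ℝ) < Real.pi := by
        have := Real.pi_gt_d6; linarith
      have hsp : 2.5 < Real.sqrt (2 * Real.pi) := by
        rw [show (2.5 : ℝ) = Real.sqrt (2.5 ^ 2) by rw [Real.sqrt_sq]; norm_num]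
        apply Real.sqrt_lt_sqrt (by norm_num)
        nlinarith
      have hsp0 : (0:ℝ) < Real.sqrt (2 * Real.pi) := by linarith
      have hs20 : (0:ℝ) < Real.sqrt 2 := by linarith
      have hL0 : 0 ≤ L := Real.sqrt_nonneg _
      -- (√2 L − L)/√2 = (1 − 1/√2) L
      have expand : (Real.sqrt (2 * Real.pi))⁻¹ * ((Real.sqrt 2 * L - L) * (Real.sqrt 2)⁻¹)
          ≤ (2.5)⁻¹ * ((Real.sqrt 2 * L - L) * (Real.sqrt 2)⁻¹) := by
        apply mul_le_mul_of_nonneg_right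
        · apply inv_anti₀ (by norm_num) hsp.le
        · exact mul_nonneg (by nlinarith [Real.sqrt_nonneg (Real.log 2)]) (inv_nonneg.2 hs20.le)
      calc (Real.sqrt (2 * Real.pi))⁻¹ * ((Real.sqrt 2 * L - L) * (Real.sqrt 2)⁻¹)
          ≤ (2.5)⁻¹ * ((Real.sqrt 2 * L - L) * (Real.sqrt 2)⁻¹) := expand
        _ < 1 / 6 := by
            have h1 : (Real.sqrt 2 * L - L) * (Real.sqrt 2)⁻¹ = L * (1 - (Real.sqrt 2)⁻¹) := by
              field_simp
            rw [h1]
            have h2 : (Real.sqrt 2)⁻¹ > 1 / 1.42 := by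
              apply one_div_lt_one_div_of_lt hs20 hs2ub |>.trans_le
              simp [one_div]
            nlinarith [hLub, hL0]
    have hI0 : True := trivial
    calc (Real.sqrt (2 * Real.pi))⁻¹
          * (∫ t in L..(Real.sqrt (2 * Real.log 2)), Real.exp (-t ^ 2 / 2))
        ≤ (Real.sqrt (2 * Real.pi))⁻¹ * ((Real.sqrt (2 * Real.log 2) - L) * (Real.sqrt 2)⁻¹) :=
          mul_le_mul_of_nonneg_left hbound hc0.le
      _ < 1 / 6 := key
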